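/- arXiv:1902.08744 — 4 statements merged into one kernel-verified Lean document; each statement's English description precedes it below -/
import Mathlib

section
/- Let h : (F_2)^m → F_2 be a feedback function whose FSR generates a de Bruijn sequence of order m, and let n > m ≥ 2. Define f : (F_2)^n → F_2 by f(x_0,...,x_{n-1}) = h(x_{n-m},...,x_{n-1}). Then in the state graph G_f, every vertex that is not a leaf has exactly two children, and for every state v there is a directed path from v to any fixed state b lying on the unique cycle of G_f (the cycle consisting of the 2^m n-stage states of the de Bruijn sequence of order m extended periodically). -/
/-- The state map of an `n`-stage FSR with feedback function `f`. -/
def stateMap (n : ℕ) (f : (Fin n → ZMod 2) → ZMod 2) (x : Fin n → ZMod 2) :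
    Fin n → ZMod 2 :=
  fun i => if h : (i : ℕ) + 1 < n then x ⟨(i : ℕ) + 1, h⟩ else f x

/-- `f(x_0, ..., x_{n-1}) = h(x_{n-m}, ..., x_{n-1})`. -/
def extendF (m n : ℕ) (hmn : m < n) (h : (Fin m → ZMod 2) → ZMod 2) :
    (Fin n → ZMod 2) → ZMod 2 :=
  fun x => h (fun j => x ⟨n - m + (j : ℕ), by have := j.isLt; omega⟩)

/-- projection onto the last `m` coordinates -/
def proj (m n : ℕ) (hmn : m < n) (x : Fin n → ZMod 2) : Fin m → ZMod 2 :=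
  fun j => x ⟨n - m + (j : ℕ), by have := j.isLt; omega⟩

/-- candidate parent of `v` with first coordinate `c` -/
def parent (n : ℕ) (v : Fin n → ZMod 2) (c : ZMod 2) : Fin n → ZMod 2 :=
  fun i => if (i : ℕ) = 0 then c else v ⟨(i : ℕ) - 1, by have := i.isLt; omega⟩

lemma coordC (n : ℕ) (f : (Fin n → ZMod 2) → ZMod 2) :
    ∀ (t : ℕ) (x : Fin n → ZMod 2) (i : Fin n) (hti : (i : ℕ) + t < n),
      (stateMap n f)^[t] x i = x ⟨(i : ℕ) + t, hti⟩
  | 0, x, i, hti => by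
    refine congrArg x ?_
    simp only [Fin.ext_iff, Fin.val_mk]
    omega
  | (t+1), x, i, hti => by
    rw [Function.iterate_succ_apply,
      coordC n f t (stateMap n f x) i (by omega)]
    simp only [stateMap, Fin.val_mk]
    rw [dif_pos (show (i : ℕ) + t + 1 < n by omega)]
    refine congrArg x ?_
    simp only [Fin.ext_iff, Fin.val_mk]
    omega

lemma conj (m n : ℕ) (hmn : m < n) (h : (Fin m → ZMod 2) → ZMod 2)
    (x : Fin n → ZMod 2) :
    proj m n hmn (stateMap n (extendF m n hmn h) x) = stateMap m h (proj m n hmn x) := by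
  funext j
  have hj' := j.isLt
  simp only [proj, stateMap, Fin.val_mk]
  by_cases hj : (j : ℕ) + 1 < m
  · rw [dif_pos (show n - m + (j : ℕ) + 1 < n by omega), dif_pos hj]
    refine congrArg x ?_
    simp only [Fin.ext_iff, Fin.val_mk]
    omega
  · rw [dif_neg (show ¬ (n - m + (j : ℕ) + 1 < n) by omega), dif_neg hj]
    rfl

lemma conj_iter (m n : ℕ) (hmn : m < n) (h : (Fin m → ZMod 2) → ZMod 2)
    (t : ℕ) (x : Fin n → ZMod 2) :
    proj m n hmn ((stateMap n (extendF m n hmn h))^[t] x)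
      = (stateMap m h)^[t] (proj m n hmn x) := by
  induction t generalizing x with
  | zero => rfl
  | succ t ih =>
    rw [Function.iterate_succ_apply, Function.iterate_succ_apply, ih, conj]

lemma lemD (m n : ℕ) (hm : 1 ≤ m) (hmn : m < n) (h : (Fin m → ZMod 2) → ZMod 2) :
    ∀ (t : ℕ) (x : Fin n → ZMod 2) (i : Fin n), n - m ≤ (i : ℕ) + t →
      (stateMap n (extendF m n hmn h))^[t] x i
        = (stateMap m h)^[(i : ℕ) + t - (n - m)] (proj m n hmn x) ⟨0, by omega⟩
  | 0, x, i, hti => by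
    have hi := i.isLt
    rw [coordC m h ((i : ℕ) + 0 - (n - m)) (proj m n hmn x) ⟨0, by omega⟩
      (by simp only [Fin.val_mk]; omega)]
    simp only [proj]
    refine (congrArg x ?_).symm
    simp only [Fin.ext_iff, Fin.val_mk]
    omega
  | (t+1), x, i, hti => by
    rcases le_or_gt (n - m) ((i : ℕ) + t) with hc | hc
    · rw [Function.iterate_succ_apply, lemD m n hm hmn h t _ i hc, conj,
        ← Function.iterate_succ_apply]
      have e : (i : ℕ) + t - (n - m) + 1 = (i : ℕ) + (t + 1) - (n - m) := by omega
      simp only [Nat.succ_eq_add_one]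
      rw [e]
    · have hin := i.isLt
      rw [coordC n (extendF m n hmn h) (t+1) x i (by omega)]
      have he : (i : ℕ) + (t + 1) - (n - m) = 0 := by omega
      rw [he]
      simp only [Function.iterate_zero, id_eq, proj]
      refine congrArg x ?_
      simp only [Fin.ext_iff, Fin.val_mk]
      omega

theorem stmt5 (m n : ℕ) (hm : 2 ≤ m) (hmn : m < n)
    (h : (Fin m → ZMod 2) → ZMod 2)
    -- the FSR with feedback function `h` generates a de Bruijn sequence of order `m`:
    -- its state map visits all `2^m` states in one cycle
    (hdb : ∀ x y : Fin m → ZMod 2, ∃ k : ℕ, (stateMap m h)^[k] x = y) :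
    -- every non-leaf vertex of `G_f` has exactly two children
    (∀ v : Fin n → ZMod 2,
      (Finset.univ.filter fun u => stateMap n (extendF m n hmn h) u = v).card = 0 ∨
      (Finset.univ.filter fun u => stateMap n (extendF m n hmn h) u = v).card = 2) ∧
    -- from every state there is a directed path to any state `b` on the unique cycle
    (∀ v b : Fin n → ZMod 2,
      (∃ k : ℕ, 0 < k ∧ (stateMap n (extendF m n hmn h))^[k] b = b) →
      ∃ k : ℕ, (stateMap n (extendF m n hmn h))^[k] v = b) := by
  have hn1 : 1 ≤ n := by omega
  constructor
  · -- children count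
    intro v
    have key : ∀ u : Fin n → ZMod 2, stateMap n (extendF m n hmn h) u = v ↔
        (h (fun j => v ⟨n - m - 1 + (j : ℕ), by have := j.isLt; omega⟩)
            = v ⟨n - 1, by omega⟩
          ∧ u = parent n v (u ⟨0, by omega⟩)) := by
      intro u
      constructor
      · intro hu
        have hcoord : ∀ (a : ℕ) (ha : a + 1 < n),
            u ⟨a + 1, ha⟩ = v ⟨a, by omega⟩ := by
          intro a ha
          have hthis := congrFun hu ⟨a, by omega⟩
          simp only [stateMap, Fin.val_mk] at hthis
          rwa [dif_pos ha] at hthis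
        have hlast : extendF m n hmn h u = v ⟨n - 1, by omega⟩ := by
          have hthis := congrFun hu ⟨n - 1, by omega⟩
          simp only [stateMap, Fin.val_mk] at hthis
          rwa [dif_neg (show ¬ (n - 1 + 1 < n) by omega)] at hthis
        constructor
        · rw [← hlast]
          simp only [extendF]
          congr 1
          funext j
          have hj := j.isLt
          symm
          calc u ⟨n - m + (j : ℕ), by omega⟩
              = u ⟨(n - m - 1 + (j : ℕ)) + 1, by omega⟩ := by
                refine congrArg u ?_
                simp only [Fin.ext_iff, Fin.val_mk]
                omega
            _ = v ⟨n - m - 1 + (j : ℕ), by omega⟩ := hcoord _ _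
        · funext i
          simp only [parent]
          by_cases hi : (i : ℕ) = 0
          · rw [if_pos hi]
            refine congrArg u ?_
            simp only [Fin.ext_iff, Fin.val_mk]
            omega
          · rw [if_neg hi]
            have hin := i.isLt
            calc u i = u ⟨((i : ℕ) - 1) + 1, by omega⟩ := by
                  refine congrArg u ?_
                  simp only [Fin.ext_iff, Fin.val_mk]
                  omega
              _ = v ⟨(i : ℕ) - 1, by omega⟩ := hcoord _ _
      · rintro ⟨hcond, hu⟩
        funext i
        simp only [stateMap]
        by_cases hi : (i : ℕ) + 1 < n
        · rw [dif_pos hi, hu]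
          simp only [parent, Fin.val_mk]
          rw [if_neg (show ¬ ((i : ℕ) + 1 = 0) by omega)]
          refine congrArg v ?_
          simp only [Fin.ext_iff, Fin.val_mk]
          omega
        · rw [dif_neg hi]
          have hin := i.isLt
          have hfu : extendF m n hmn h u
              = h (fun j => v ⟨n - m - 1 + (j : ℕ), by have := j.isLt; omega⟩) := by
            simp only [extendF]
            congr 1
            funext j
            have hj := j.isLt
            rw [hu]
            simp only [parent, Fin.val_mk]
            rw [if_neg (show ¬ (n - m + (j : ℕ) = 0) by omega)]
            refine congrArg v ?_
            simp only [Fin.ext_iff, Fin.val_mk]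
            omega
          rw [hfu, hcond]
          refine congrArg v ?_
          simp only [Fin.ext_iff, Fin.val_mk]
          omega
    have hp0 : ∀ c : ZMod 2, parent n v c ⟨0, by omega⟩ = c := by
      intro c
      simp [parent]
    by_cases hcond : h (fun j => v ⟨n - m - 1 + (j : ℕ), by have := j.isLt; omega⟩)
        = v ⟨n - 1, by omega⟩
    · right
      have hset : (Finset.univ.filter fun u => stateMap n (extendF m n hmn h) u = v)
          = {parent n v 0, parent n v 1} := by
        ext u
        simp only [Finset.mem_filter, Finset.mem_univ, true_and, Finset.mem_insert,
          Finset.mem_singleton]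
        rw [key u]
        constructor
        · rintro ⟨-, hu⟩
          rcases (show ∀ c : ZMod 2, c = 0 ∨ c = 1 by decide) (u ⟨0, by omega⟩) with h0 | h0
          · left; rw [hu, h0]
          · right; rw [hu, h0]
        · intro hu
          refine ⟨hcond, ?_⟩
          rcases hu with hu | hu <;> rw [hu, hp0]
      rw [hset, Finset.card_pair]
      intro hcontra
      have h01 := congrFun hcontra ⟨0, by omega⟩
      rw [hp0, hp0] at h01
      exact absurd h01 (by decide)
    · left
      rw [Finset.card_eq_zero, Finset.filter_eq_empty_iff]
      intro u _
      rw [key u]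
      rintro ⟨hc, -⟩
      exact hcond hc
  · -- reachability
    intro v b hb
    obtain ⟨k, hk, hkb⟩ := hb
    have hm1 : 1 ≤ m := by omega
    have hKb : (stateMap n (extendF m n hmn h))^[k * n] b = b := by
      rw [Function.iterate_mul]
      exact Function.iterate_fixed hkb n
    have hKn : n - m ≤ k * n := by
      have : n ≤ k * n := Nat.le_mul_of_pos_left n hk
      omega
    obtain ⟨r, hr⟩ := hdb (proj m n hmn v)
      ((stateMap m h)^[k * n - (n - m)] (proj m n hmn b))
    refine ⟨n - m + r, ?_⟩
    funext i
    rw [lemD m n hm1 hmn h (n - m + r) v i (by omega)]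
    have e1 : (i : ℕ) + (n - m + r) - (n - m) = (i : ℕ) + r := by omega
    rw [e1, Function.iterate_add_apply, hr, ← Function.iterate_add_apply]
    have hb' := congrFun hKb i
    rw [lemD m n hm1 hmn h (k * n) b i (by omega)] at hb'
    have e2 : (i : ℕ) + (k * n - (n - m)) = (i : ℕ) + k * n - (n - m) := by omega
    rw [e2]
    exact hb'
end

section
/- Fix n ≥ 2 and an integer t with 0 < t < n, and let f(x_0,...,x_{n-1}) = 1 + x_t · x_{t+1} · ... · x_{n-1} over F_2. Then the set of periodic states of the state map of f (states lying on directed cycles of G_f) is exactly the set of n-stage states of the periodic sequence (0, 1^{n-t}) of period n-t+1, and they form a single directed cycle of length n-t+1. -/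
/-- The periodic binary sequence of period `p` consisting of one `0` followed by
`p - 1` ones. -/
def zeroOnesSeq (p : ℕ) (i : ℕ) : ZMod 2 := if i % p = 0 then 0 else 1

lemma prodZ (n t : ℕ) (hn : 2 ≤ n) (ht0 : 0 < t) (ht : t < n) (k : ℕ) :
    (1 + ∏ i : Fin n, (if t ≤ (i : ℕ) then zeroOnesSeq (n - t + 1) (k + (i : ℕ)) else 1) : ZMod 2)
      = zeroOnesSeq (n - t + 1) (k + n) := by
  have hp2 : 2 ≤ n - t + 1 := by omega
  set p := n - t + 1 with hp
  by_cases h : (k + n) % p = 0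
  · have hall : ∀ i : Fin n, (if t ≤ ((i : ℕ)) then zeroOnesSeq p (k + (i : ℕ)) else 1) = 1 := by
      intro i
      by_cases hti : t ≤ (i : ℕ)
      · rw [if_pos hti]
        have hne : (k + (i : ℕ)) % p ≠ 0 := by
          intro h0
          have h1 : p ∣ (k + n) := Nat.dvd_of_mod_eq_zero h
          have h2 : p ∣ (k + (i : ℕ)) := Nat.dvd_of_mod_eq_zero h0
          have h3 : p ∣ (k + n) - (k + (i : ℕ)) := Nat.dvd_sub h1 h2
          have h4 : (k + n) - (k + (i : ℕ)) = n - (i : ℕ) := by omega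
          rw [h4] at h3
          have hlt := i.isLt
          have h5 := Nat.le_of_dvd (by omega) h3
          omega
        simp [zeroOnesSeq, hne]
      · rw [if_neg hti]
    rw [Finset.prod_eq_one (fun i _ => hall i)]
    rw [show zeroOnesSeq p (k + n) = 0 from by simp [zeroOnesSeq, h]]
    decide
  · have hrlt : (k + t) % p < p := Nat.mod_lt _ (by omega)
    have hr1 : (k + t) % p ≠ 1 := by
      intro h1
      apply h
      have he : k + n = (k + t) + (p - 1) := by omega
      rw [he, Nat.add_mod, h1, Nat.mod_eq_of_lt (show p - 1 < p by omega),
        show 1 + (p - 1) = p by omega, Nat.mod_self]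
    set i0 := t + (p - (k + t) % p) % p with hi0
    have hi0n : i0 < n := by
      rcases Nat.eq_zero_or_pos ((k + t) % p) with h0 | hpos
      · rw [hi0, h0, Nat.sub_zero, Nat.mod_self]; omega
      · rw [hi0, Nat.mod_eq_of_lt (show p - (k + t) % p < p by omega)]; omega
    have hti0 : t ≤ i0 := Nat.le_add_right _ _
    have hki0 : (k + i0) % p = 0 := by
      rcases Nat.eq_zero_or_pos ((k + t) % p) with h0 | hpos
      · rw [hi0, h0, Nat.sub_zero, Nat.mod_self, Nat.add_zero]
        exact h0
      · rw [hi0, Nat.mod_eq_of_lt (show p - (k + t) % p < p by omega),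
          show k + (t + (p - (k + t) % p)) = (k + t) + (p - (k + t) % p) by omega,
          Nat.add_mod, Nat.mod_eq_of_lt (show p - (k + t) % p < p by omega),
          show (k + t) % p + (p - (k + t) % p) = p by omega, Nat.mod_self]
    have hzero : (∏ i : Fin n, (if t ≤ (i : ℕ) then zeroOnesSeq p (k + (i : ℕ)) else 1) : ZMod 2) = 0 := by
      apply Finset.prod_eq_zero (Finset.mem_univ (⟨i0, hi0n⟩ : Fin n))
      rw [if_pos hti0]
      simp [zeroOnesSeq, hki0]
    rw [hzero]
    rw [show zeroOnesSeq p (k + n) = 1 from by simp [zeroOnesSeq, h]]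
    decide

theorem stmt6 (n t : ℕ) (hn : 2 ≤ n) (ht0 : 0 < t) (ht : t < n) :
    let f : (Fin n → ZMod 2) → ZMod 2 :=
      fun x => 1 + ∏ i : Fin n, (if t ≤ (i : ℕ) then x i else 1)
    let window : ℕ → (Fin n → ZMod 2) :=
      fun k => fun i : Fin n => zeroOnesSeq (n - t + 1) (k + (i : ℕ))
    -- the periodic states are exactly the n-stage states of (0, 1^{n-t})
    ({x : Fin n → ZMod 2 | ∃ k : ℕ, 0 < k ∧ (stateMap n f)^[k] x = x} =
      {x : Fin n → ZMod 2 | ∃ k : ℕ, x = window k}) ∧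
    -- they form a single directed cycle of length n - t + 1
    (∀ k : ℕ, stateMap n f (window k) = window (k + 1)) ∧
    Function.minimalPeriod (stateMap n f) (window 0) = n - t + 1 := by
  intro f window
  have hn0 : 0 < n := by omega
  have hp2 : 2 ≤ n - t + 1 := by omega
  have hstep : ∀ k, stateMap n f (window k) = window (k + 1) := by
    intro k
    funext i
    simp only [stateMap]
    by_cases h : (i : ℕ) + 1 < n
    · rw [dif_pos h]
      show zeroOnesSeq (n - t + 1) (k + ((i : ℕ) + 1)) = zeroOnesSeq (n - t + 1) ((k + 1) + (i : ℕ))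
      congr 1
      omega
    · rw [dif_neg h]
      have hi : (i : ℕ) = n - 1 := by have := i.isLt; omega
      show (1 + ∏ j : Fin n, (if t ≤ (j : ℕ) then zeroOnesSeq (n - t + 1) (k + (j : ℕ)) else 1) : ZMod 2)
          = zeroOnesSeq (n - t + 1) ((k + 1) + (i : ℕ))
      rw [prodZ n t hn ht0 ht k]
      congr 1
      omega
  have hiter : ∀ (j k : ℕ), (stateMap n f)^[j] (window k) = window (k + j) := by
    intro j
    induction j with
    | zero => intro k; simp
    | succ j ih =>
      intro k
      rw [Function.iterate_succ_apply', ih, hstep, Nat.add_assoc]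
  have hwp : ∀ k, window (k + (n - t + 1)) = window k := by
    intro k
    funext i
    show zeroOnesSeq (n - t + 1) (k + (n - t + 1) + (i : ℕ)) = zeroOnesSeq (n - t + 1) (k + (i : ℕ))
    have hm : (k + (n - t + 1) + (i : ℕ)) % (n - t + 1) = (k + (i : ℕ)) % (n - t + 1) := by
      rw [show k + (n - t + 1) + (i : ℕ) = (k + (i : ℕ)) + (n - t + 1) by omega, Nat.add_mod_right]
    simp [zeroOnesSeq, hm]
  refine ⟨?_, hstep, ?_⟩
  · ext x
    simp only [Set.mem_setOf_eq]
    constructor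
    · rintro ⟨k, hk0, hk⟩
      set F := stateMap n f with hF
      have hshift : ∀ (j : ℕ) (hj : j < n) (y : Fin n → ZMod 2),
          (F^[j] y) ⟨0, hn0⟩ = y ⟨j, hj⟩ := by
        intro j
        induction j with
        | zero => intro hj y; rfl
        | succ j ih =>
          intro hj y
          rw [Function.iterate_succ_apply, ih (by omega) (F y)]
          show (stateMap n f y) ⟨j, by omega⟩ = _
          simp only [stateMap]
          rw [dif_pos (show j + 1 < n from hj)]
      set s : ℕ → ZMod 2 := fun m => (F^[m] x) ⟨0, hn0⟩ with hs
      have S1 : ∀ (m : ℕ) (i : Fin n), (F^[m] x) i = s (m + (i : ℕ)) := by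
        intro m i
        have h1 : s (m + (i : ℕ)) = (F^[(i : ℕ) + m] x) ⟨0, hn0⟩ := by
          rw [hs]; congr 1; omega
        rw [h1, Function.iterate_add_apply, hshift (i : ℕ) i.isLt]
      have S2 : ∀ m : ℕ, s (m + n) =
          1 + ∏ i : Fin n, (if t ≤ (i : ℕ) then s (m + (i : ℕ)) else 1) := by
        intro m
        have h1 : (F^[m + 1] x) ⟨n - 1, by omega⟩ = s (m + n) := by
          rw [S1 (m + 1) ⟨n - 1, by omega⟩]
          congr 1
          show m + 1 + (n - 1) = m + n
          omega
        rw [← h1, Function.iterate_succ_apply']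
        show (stateMap n f (F^[m] x)) ⟨n - 1, by omega⟩ = _
        simp only [stateMap]
        rw [dif_neg (show ¬ ((n - 1 : ℕ) + 1 < n) by omega)]
        show (1 + ∏ i : Fin n, (if t ≤ (i : ℕ) then (F^[m] x) i else 1) : ZMod 2) = _
        congr 1
        apply Finset.prod_congr rfl
        intro i _
        by_cases hti : t ≤ (i : ℕ)
        · rw [if_pos hti, if_pos hti, S1]
        · rw [if_neg hti, if_neg hti]
      have S3 : ∀ (m j : ℕ), s (m + j * k) = s m := by
        intro m j
        induction j with
        | zero => simp
        | succ j ih =>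
          have h2 : s (m + (j + 1) * k) = s (m + j * k) := by
            show (F^[m + (j + 1) * k] x) ⟨0, hn0⟩ = (F^[m + j * k] x) ⟨0, hn0⟩
            rw [show m + (j + 1) * k = (m + j * k) + k by ring, Function.iterate_add_apply, hk]
          rw [h2, ih]
      have F1 : ∀ m i : ℕ, t ≤ i → i < n → s (m + i) = 0 → s (m + n) = 1 := by
        intro m i hti hin h0
        rw [S2 m]
        have hprod : (∏ j : Fin n, (if t ≤ (j : ℕ) then s (m + (j : ℕ)) else 1) : ZMod 2) = 0 := by
          apply Finset.prod_eq_zero (Finset.mem_univ (⟨i, hin⟩ : Fin n))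
          rw [if_pos hti]
          exact h0
        rw [hprod, add_zero]
      have F2 : ∀ m : ℕ, (∀ i : ℕ, t ≤ i → i < n → s (m + i) = 1) → s (m + n) = 0 := by
        intro m hall
        rw [S2 m]
        have hprod : (∏ j : Fin n, (if t ≤ (j : ℕ) then s (m + (j : ℕ)) else 1) : ZMod 2) = 1 := by
          apply Finset.prod_eq_one
          intro j _
          by_cases hti : t ≤ (j : ℕ)
          · rw [if_pos hti]; exact hall _ hti j.isLt
          · rw [if_neg hti]
        rw [hprod]
        decide
      have hz01 : ∀ z : ZMod 2, z ≠ 1 → z = 0 := by decide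
      have hzero : ∃ a, n ≤ a ∧ s a = 0 := by
        by_cases hone : ∀ i : ℕ, t ≤ i → i < n → s i = 1
        · refine ⟨n, le_refl n, ?_⟩
          have h5 := F2 0 (by intro i h1 h2; rw [Nat.zero_add]; exact hone i h1 h2)
          rwa [Nat.zero_add] at h5
        · push_neg at hone
          obtain ⟨i, hti, hin, hsi⟩ := hone
          have hsi0 : s i = 0 := hz01 _ hsi
          refine ⟨i + n * k, ?_, ?_⟩
          · have : n ≤ n * k := Nat.le_mul_of_pos_right n hk0
            omega
          · rw [S3 i n]
            exact hsi0
      have prop : ∀ (d a : ℕ), n ≤ a → s a = 0 →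
          s (a + d) = (if d % (n - t + 1) = 0 then 0 else 1) := by
        intro d
        induction d using Nat.strong_induction_on with
        | _ d ih =>
          intro a ha h0
          by_cases hdp : d < n - t + 1
          · rcases Nat.eq_zero_or_pos d with hd0 | hd1
            · subst hd0
              rw [if_pos (Nat.zero_mod _)]
              simpa using h0
            · rw [if_neg (by rw [Nat.mod_eq_of_lt hdp]; omega)]
              have hm : (a + d - n) + (n - d) = a := by omega
              have h6 := F1 (a + d - n) (n - d) (by omega) (by omega) (by rw [hm]; exact h0)
              rwa [show a + d - n + n = a + d by omega] at h6
          · have hones : ∀ i : ℕ, t ≤ i → i < n → s ((a + (n - t + 1) - n) + i) = 1 := by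
              intro i hti hin
              have he : (a + (n - t + 1) - n) + i = a + (i - t + 1) := by omega
              have h7 := ih (i - t + 1) (by omega) a ha h0
              rw [if_neg (by rw [Nat.mod_eq_of_lt (by omega)]; omega)] at h7
              rw [he]; exact h7
            have hp0 : s (a + (n - t + 1)) = 0 := by
              have h8 := F2 (a + (n - t + 1) - n) hones
              rwa [show a + (n - t + 1) - n + n = a + (n - t + 1) by omega] at h8
            have h9 := ih (d - (n - t + 1)) (by omega) (a + (n - t + 1)) (by omega) hp0
            rw [show a + (n - t + 1) + (d - (n - t + 1)) = a + d by omega] at h9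
            rw [h9]
            have hmod : (d - (n - t + 1)) % (n - t + 1) = d % (n - t + 1) := by
              conv_rhs => rw [Nat.mod_eq_sub_mod (by omega : n - t + 1 ≤ d)]
            rw [hmod]
      obtain ⟨a, han, ha0⟩ := hzero
      have hak : a ≤ a * k := Nat.le_mul_of_pos_right a hk0
      refine ⟨a * k - a, ?_⟩
      funext i
      have h1 : x i = s (i : ℕ) := by
        have := S1 0 i
        simpa using this
      have h2 : s ((i : ℕ) + a * k) = s (i : ℕ) := S3 (i : ℕ) a
      have h4 := prop ((a * k - a) + (i : ℕ)) a han ha0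
      rw [show a + ((a * k - a) + (i : ℕ)) = (i : ℕ) + a * k by omega] at h4
      show x i = zeroOnesSeq (n - t + 1) ((a * k - a) + (i : ℕ))
      rw [h1, ← h2, h4]
      rfl
    · rintro ⟨k, rfl⟩
      exact ⟨n - t + 1, by omega, by rw [hiter]; exact hwp k⟩
  · have hpp : Function.IsPeriodicPt (stateMap n f) (n - t + 1) (window 0) := by
      show (stateMap n f)^[n - t + 1] (window 0) = window 0
      rw [hiter]
      exact hwp 0
    have hne : ∀ j : ℕ, 0 < j → j < n - t + 1 → window j ≠ window 0 := by
      intro j hj1 hj2 hcon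
      have h1 : zeroOnesSeq (n - t + 1) (j + 0) = zeroOnesSeq (n - t + 1) (0 + 0) :=
        congrFun hcon ⟨0, hn0⟩
      simp [zeroOnesSeq, Nat.mod_eq_of_lt hj2, hj1.ne'] at h1
    apply le_antisymm
    · exact hpp.minimalPeriod_le (by omega)
    · by_contra hlt
      push_neg at hlt
      have hdpos : 0 < Function.minimalPeriod (stateMap n f) (window 0) :=
        hpp.minimalPeriod_pos (by omega)
      have hd := Function.isPeriodicPt_minimalPeriod (stateMap n f) (window 0)
      have hw : window (0 + Function.minimalPeriod (stateMap n f) (window 0)) = window 0 := by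
        rw [← hiter]; exact hd
      rw [Nat.zero_add] at hw
      exact hne _ hdpos hlt hw
end

section
/- For n ≥ 4, let f(x_0,...,x_{n-1}) = 1 + x_{n-3} + x_{n-1} + x_{n-3}·x_{n-2} + x_{n-2}·x_{n-1} + x_{n-3}·x_{n-2}·x_{n-1} over F_2. Then the periodic states of the state map of f form a single directed cycle of length 4 consisting exactly of the n-stage states of the periodic sequence (1,1,1,0). -/
/-- The periodic binary sequence `(1,1,1,0)` of period `4`. -/
def seq1110 (i : ℕ) : ZMod 2 := if i % 4 = 3 then 0 else 1

def F2 (a b c : ZMod 2) : ZMod 2 := 1 + a + c + a*b + b*c + a*b*c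

def T (p : ZMod 2 × ZMod 2 × ZMod 2) : ZMod 2 × ZMod 2 × ZMod 2 :=
  (p.2.1, p.2.2, F2 p.1 p.2.1 p.2.2)

lemma T8 : ∀ p, T^[8] p = T^[4] p := by decide

lemma T4_cycle : ∀ p, T^[4] p = p →
    p = (1,1,1) ∨ p = (1,1,0) ∨ p = (1,0,1) ∨ p = (0,1,1) := by decide

lemma seq_per (j : ℕ) : seq1110 (j + 4) = seq1110 j := by
  simp [seq1110, Nat.add_mod]

lemma seq_rec (j : ℕ) : seq1110 (j+3) = F2 (seq1110 j) (seq1110 (j+1)) (seq1110 (j+2)) := by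
  have h : j % 4 = 0 ∨ j % 4 = 1 ∨ j % 4 = 2 ∨ j % 4 = 3 := by omega
  have e1 : (j+1) % 4 = (j % 4 + 1) % 4 := by omega
  have e2 : (j+2) % 4 = (j % 4 + 2) % 4 := by omega
  have e3 : (j+3) % 4 = (j % 4 + 3) % 4 := by omega
  rcases h with h|h|h|h <;> simp [seq1110, F2, e1, e2, e3, h] <;> decide

lemma T_mul4 : ∀ (k : ℕ) (p), T^[4*(k+1)] p = T^[4] p := by
  intro k
  induction k with
  | zero => intro p; norm_num
  | succ k ih =>
    intro p
    have e : 4*(k+1+1) = 4*(k+1) + 4 := by ring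
    rw [e, Function.iterate_add_apply, ih, ← Function.iterate_add_apply]
    norm_num
    exact T8 p

def sseq (n : ℕ) (hn : 4 ≤ n) (f : (Fin n → ZMod 2) → ZMod 2)
    (x : Fin n → ZMod 2) (m : ℕ) : ZMod 2 :=
  (stateMap n f)^[m] x ⟨0, by omega⟩

lemma shift (n : ℕ) (hn : 4 ≤ n) (f : (Fin n → ZMod 2) → ZMod 2)
    (x : Fin n → ZMod 2) : ∀ (j : ℕ) (m : ℕ) (hj : j < n),
    ((stateMap n f)^[m] x) ⟨j, hj⟩ = sseq n hn f x (m + j) := by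
  intro j
  induction j with
  | zero => intro m hj; rfl
  | succ j ih =>
    intro m hj
    have key : ((stateMap n f)^[m+1] x) ⟨j, by omega⟩ = ((stateMap n f)^[m] x) ⟨j+1, hj⟩ := by
      rw [Function.iterate_succ_apply']
      simp only [stateMap]
      rw [dif_pos hj]
    rw [← key, ih (m+1) (by omega)]
    congr 1
    omega

lemma srec (n : ℕ) (hn : 4 ≤ n) (f : (Fin n → ZMod 2) → ZMod 2)
    (hf : ∀ y, f y = F2 (y ⟨n-3, Nat.sub_lt (by omega) (by norm_num)⟩) (y ⟨n-2, Nat.sub_lt (by omega) (by norm_num)⟩) (y ⟨n-1, Nat.sub_lt (by omega) (by norm_num)⟩))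
    (x : Fin n → ZMod 2) (m : ℕ) :
    sseq n hn f x (m + n) =
      F2 (sseq n hn f x (m + (n-3))) (sseq n hn f x (m + (n-2))) (sseq n hn f x (m + (n-1))) := by
  have h1 : ((stateMap n f)^[m+1] x) ⟨n-1, by omega⟩ = sseq n hn f x (m + n) := by
    rw [shift n hn f x (n-1) (m+1) (by omega)]
    congr 1
    omega
  rw [← h1, Function.iterate_succ_apply']
  show stateMap n f ((stateMap n f)^[m] x) ⟨n-1, by omega⟩ = _
  simp only [stateMap]
  rw [dif_neg (by omega)]
  rw [hf]
  rw [shift n hn f x (n-3) m (by omega), shift n hn f x (n-2) m (by omega),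
      shift n hn f x (n-1) m (by omega)]

/-- Every periodic state is a window of the sequence (1,1,1,0). -/
lemma periodic_is_window (n : ℕ) (hn : 4 ≤ n) (f : (Fin n → ZMod 2) → ZMod 2)
    (hf : ∀ y, f y = F2 (y ⟨n-3, Nat.sub_lt (by omega) (by norm_num)⟩) (y ⟨n-2, Nat.sub_lt (by omega) (by norm_num)⟩) (y ⟨n-1, Nat.sub_lt (by omega) (by norm_num)⟩))
    (x : Fin n → ZMod 2) (k : ℕ) (hk : 0 < k) (hfix : (stateMap n f)^[k] x = x) :
    ∃ m : ℕ, x = fun i : Fin n => seq1110 (m + (i : ℕ)) := by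
  set s := sseq n hn f x with hs
  -- periodicity of s
  have hper : ∀ m, s (m + k) = s m := by
    intro m
    show sseq n hn f x (m + k) = sseq n hn f x m
    unfold sseq
    rw [Function.iterate_add_apply, hfix]
  have hperL : ∀ L m, s (m + L*k) = s m := by
    intro L
    induction L with
    | zero => intro m; simp
    | succ L ih =>
      intro m
      have e : m + (L+1)*k = (m + k) + L*k := by ring
      rw [e, ih, hper]
  -- recurrence for s everywhere
  have hrec' : ∀ j, s (j+3) = F2 (s j) (s (j+1)) (s (j+2)) := by
    intro j
    have hnk : n ≤ n * k := Nat.le_mul_of_pos_right n hk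
    have key := srec n hn f hf x (j + 3 + n*k - n)
    have e0 : (j + 3 + n*k - n) + n = j + 3 + n*k := by omega
    have e1 : (j + 3 + n*k - n) + (n-3) = j + n*k := by omega
    have e2 : (j + 3 + n*k - n) + (n-2) = j + 1 + n*k := by omega
    have e3 : (j + 3 + n*k - n) + (n-1) = j + 2 + n*k := by omega
    rw [e0, e1, e2, e3] at key
    have p0 : sseq n hn f x (j + 3 + n*k) = s (j+3) := by
      show s (j + 3 + n*k) = s (j+3); rw [hperL n (j+3)]
    have p1 : sseq n hn f x (j + n*k) = s j := by
      show s (j + n*k) = s j; rw [hperL n j]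
    have p2 : sseq n hn f x (j + 1 + n*k) = s (j+1) := by
      show s (j + 1 + n*k) = s (j+1); rw [hperL n (j+1)]
    have p3 : sseq n hn f x (j + 2 + n*k) = s (j+2) := by
      show s (j + 2 + n*k) = s (j+2); rw [hperL n (j+2)]
    rw [p0, p1, p2, p3] at key
    exact key
  -- triple dynamics
  have hT : ∀ j, T^[j] (s 0, s 1, s 2) = (s j, s (j+1), s (j+2)) := by
    intro j
    induction j with
    | zero => rfl
    | succ j ih =>
      rw [Function.iterate_succ_apply', ih]
      show (s (j+1), s (j+2), F2 (s j) (s (j+1)) (s (j+2))) = _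
      rw [← hrec' j]
  have hTk : T^[k] (s 0, s 1, s 2) = (s 0, s 1, s 2) := by
    rw [hT]
    have a0 : s k = s 0 := by have := hper 0; simpa using this
    have a1 : s (k+1) = s 1 := by have := hper 1; rwa [add_comm 1 k] at this
    have a2 : s (k+2) = s 2 := by have := hper 2; rwa [add_comm 2 k] at this
    rw [a0, a1, a2]
  have h4k : T^[4*k] (s 0, s 1, s 2) = (s 0, s 1, s 2) := by
    rw [mul_comm, Function.iterate_mul]
    rw [Function.iterate_fixed hTk]
  have h4 : T^[4] (s 0, s 1, s 2) = (s 0, s 1, s 2) := by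
    obtain ⟨k', rfl⟩ : ∃ k', k = k' + 1 := ⟨k - 1, by omega⟩
    rw [← T_mul4 k' (s 0, s 1, s 2)]
    exact h4k
  -- find phase m
  have hcyc := T4_cycle _ h4
  have hm : ∃ m : ℕ, s 0 = seq1110 m ∧ s 1 = seq1110 (m+1) ∧ s 2 = seq1110 (m+2) := by
    rcases hcyc with h|h|h|h
    · exact ⟨0, by rw [Prod.ext_iff, Prod.ext_iff] at h; exact ⟨h.1, h.2.1, h.2.2⟩⟩
    · exact ⟨1, by rw [Prod.ext_iff, Prod.ext_iff] at h; exact ⟨h.1, h.2.1, h.2.2⟩⟩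
    · exact ⟨2, by rw [Prod.ext_iff, Prod.ext_iff] at h; exact ⟨h.1, h.2.1, h.2.2⟩⟩
    · exact ⟨3, by rw [Prod.ext_iff, Prod.ext_iff] at h; exact ⟨h.1, h.2.1, h.2.2⟩⟩
  obtain ⟨m, hm0, hm1, hm2⟩ := hm
  have hall : ∀ j, s j = seq1110 (m + j) ∧ s (j+1) = seq1110 (m + (j+1)) ∧
      s (j+2) = seq1110 (m + (j+2)) := by
    intro j
    induction j with
    | zero => exact ⟨by simpa using hm0, by simpa using hm1, by simpa using hm2⟩
    | succ j ih =>
      obtain ⟨a, b, c⟩ := ih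
      refine ⟨by rwa [show m + (j+1) = m + j + 1 from by omega] at b ⊢, ?_, ?_⟩
      · rwa [show m + (j+1+1) = m + (j+2) from by omega]
      · have : s (j+3) = seq1110 (m + j + 3) := by
          rw [hrec' j, a, b, c]
          rw [show m + (j+1) = m + j + 1 from by omega, show m + (j+2) = m + j + 2 from by omega]
          exact (seq_rec (m+j)).symm
        rwa [show j+1+2 = j+3 from by omega, show m + (j+1+2) = m + j + 3 from by omega]
  refine ⟨m, ?_⟩
  funext i
  calc x i = ((stateMap n f)^[0] x) ⟨i.1, i.2⟩ := rfl
  _ = sseq n hn f x (0 + i.1) := shift n hn f x i.1 0 i.2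
  _ = s i.1 := by rw [Nat.zero_add]
  _ = seq1110 (m + i.1) := (hall i.1).1

lemma step (n : ℕ) (hn : 4 ≤ n) (f : (Fin n → ZMod 2) → ZMod 2)
    (hf : ∀ y, f y = F2 (y ⟨n-3, Nat.sub_lt (by omega) (by norm_num)⟩) (y ⟨n-2, Nat.sub_lt (by omega) (by norm_num)⟩) (y ⟨n-1, Nat.sub_lt (by omega) (by norm_num)⟩))
    (k : ℕ) :
    stateMap n f (fun i : Fin n => seq1110 (k + (i : ℕ))) =
      fun i : Fin n => seq1110 (k + 1 + (i : ℕ)) := by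
  funext i
  simp only [stateMap]
  split
  · next h =>
    show seq1110 (k + ((i : ℕ)+1)) = seq1110 (k + 1 + (i : ℕ))
    congr 1
    omega
  · next h =>
    have hi : (i : ℕ) = n - 1 := by have := i.2; omega
    rw [hf]
    show F2 (seq1110 (k + (n-3))) (seq1110 (k + (n-2))) (seq1110 (k + (n-1)))
        = seq1110 (k + 1 + (i : ℕ))
    have hr := seq_rec (k + (n-3))
    rw [show k + (n-3) + 1 = k + (n-2) from by omega,
        show k + (n-3) + 2 = k + (n-1) from by omega] at hr
    rw [← hr]
    congr 1
    omega

lemma step4 (n : ℕ) (hn : 4 ≤ n) (f : (Fin n → ZMod 2) → ZMod 2)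
    (hf : ∀ y, f y = F2 (y ⟨n-3, Nat.sub_lt (by omega) (by norm_num)⟩) (y ⟨n-2, Nat.sub_lt (by omega) (by norm_num)⟩) (y ⟨n-1, Nat.sub_lt (by omega) (by norm_num)⟩))
    (k : ℕ) :
    (stateMap n f)^[4] (fun i : Fin n => seq1110 (k + (i : ℕ))) =
      fun i : Fin n => seq1110 (k + (i : ℕ)) := by
  have e : (stateMap n f)^[4] (fun i : Fin n => seq1110 (k + (i : ℕ)))
      = stateMap n f (stateMap n f (stateMap n f (stateMap n f
          (fun i : Fin n => seq1110 (k + (i : ℕ)))))) := rfl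
  rw [e, step n hn f hf k, step n hn f hf (k+1), step n hn f hf (k+2), step n hn f hf (k+3)]
  funext i
  rw [show k+1+1+1+1+(i:ℕ) = (k + (i:ℕ)) + 4 from by omega, seq_per]

lemma minper (n : ℕ) (hn : 4 ≤ n) (f : (Fin n → ZMod 2) → ZMod 2)
    (hf : ∀ y, f y = F2 (y ⟨n-3, Nat.sub_lt (by omega) (by norm_num)⟩) (y ⟨n-2, Nat.sub_lt (by omega) (by norm_num)⟩) (y ⟨n-1, Nat.sub_lt (by omega) (by norm_num)⟩)) :
    Function.minimalPeriod (stateMap n f) (fun i : Fin n => seq1110 (0 + (i : ℕ))) = 4 := by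
  set w : ℕ → (Fin n → ZMod 2) := fun k => fun i : Fin n => seq1110 (k + (i : ℕ)) with hw
  have hp : Function.IsPeriodicPt (stateMap n f) 4 (w 0) := step4 n hn f hf 0
  have hd : Function.minimalPeriod (stateMap n f) (w 0) ∣ 4 := hp.minimalPeriod_dvd
  have hpos : 0 < Function.minimalPeriod (stateMap n f) (w 0) :=
    hp.minimalPeriod_pos (by norm_num)
  have hit := Function.iterate_minimalPeriod (f := stateMap n f) (x := w 0)
  have hne1 : Function.minimalPeriod (stateMap n f) (w 0) ≠ 1 := by
    intro h
    rw [h] at hit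
    have h1 : stateMap n f (w 0) = w 1 := step n hn f hf 0
    rw [Function.iterate_one, h1] at hit
    have := congrFun hit ⟨2, by omega⟩
    simp only [w, seq1110] at this
    norm_num at this
  have hne2 : Function.minimalPeriod (stateMap n f) (w 0) ≠ 2 := by
    intro h
    rw [h] at hit
    have h2 : (stateMap n f)^[2] (w 0) = w 2 := by
      have e : (stateMap n f)^[2] (w 0) = stateMap n f (stateMap n f (w 0)) := rfl
      rw [e, step n hn f hf 0, step n hn f hf 1]
    rw [h2] at hit
    have := congrFun hit ⟨1, by omega⟩
    simp only [w, seq1110] at this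
    norm_num at this
  have hle : Function.minimalPeriod (stateMap n f) (w 0) ≤ 4 := Nat.le_of_dvd (by norm_num) hd
  set d := Function.minimalPeriod (stateMap n f) (w 0) with hdd
  interval_cases d <;> omega

theorem stmt7 (n : ℕ) (hn : 4 ≤ n) :
    let f : (Fin n → ZMod 2) → ZMod 2 := fun x =>
      1 + x ⟨n - 3, by omega⟩ + x ⟨n - 1, by omega⟩
        + x ⟨n - 3, by omega⟩ * x ⟨n - 2, by omega⟩
        + x ⟨n - 2, by omega⟩ * x ⟨n - 1, by omega⟩
        + x ⟨n - 3, by omega⟩ * x ⟨n - 2, by omega⟩ * x ⟨n - 1, by omega⟩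
    let window : ℕ → (Fin n → ZMod 2) :=
      fun k => fun i : Fin n => seq1110 (k + (i : ℕ))
    -- the periodic states are exactly the n-stage states of (1,1,1,0)
    ({x : Fin n → ZMod 2 | ∃ k : ℕ, 0 < k ∧ (stateMap n f)^[k] x = x} =
      {x : Fin n → ZMod 2 | ∃ k : ℕ, x = window k}) ∧
    -- they form a single directed cycle of length 4
    (∀ k : ℕ, stateMap n f (window k) = window (k + 1)) ∧
    Function.minimalPeriod (stateMap n f) (window 0) = 4 := by
  intro f window
  have hf : ∀ y, f y = F2 (y ⟨n-3, by omega⟩) (y ⟨n-2, by omega⟩) (y ⟨n-1, by omega⟩) :=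
    fun y => rfl
  refine ⟨?_, fun k => step n hn f hf k, minper n hn f hf⟩
  ext x
  simp only [Set.mem_setOf_eq]
  constructor
  · rintro ⟨k, hk, hfix⟩
    exact periodic_is_window n hn f hf x k hk hfix
  · rintro ⟨k, rfl⟩
    exact ⟨4, by norm_num, step4 n hn f hf k⟩
end

section
/- For n ≥ 2 and f(x_0,...,x_{n-1}) = x_t · x_{t+1} · ... · x_{n-1} with 0 ≤ t < n over F_2, the only fixed points of the state map of f are the all-zero state 0^n and the all-ones state 1^n, and every state eventually reaches one of these two fixed points under iteration of the state map. -/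
theorem stmt8 (n t : ℕ) (hn : 2 ≤ n) (ht : t < n) :
    let f : (Fin n → ZMod 2) → ZMod 2 :=
      fun x => ∏ i : Fin n, (if t ≤ (i : ℕ) then x i else 1)
    -- the only fixed points of the state map are 0^n and 1^n
    (∀ x : Fin n → ZMod 2,
      stateMap n f x = x ↔ (x = fun _ => 0) ∨ (x = fun _ => 1)) ∧
    -- every state eventually reaches one of the two fixed points
    (∀ x : Fin n → ZMod 2, ∃ k : ℕ,
      (stateMap n f)^[k] x = (fun _ => 0) ∨ (stateMap n f)^[k] x = (fun _ => 1)) := by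
  intro f
  have hnpos : 0 < n := by omega
  have hcases : ∀ c : ZMod 2, c = 0 ∨ c = 1 := by decide
  have hfz : ∀ (y : Fin n → ZMod 2) (j : Fin n), t ≤ (j : ℕ) → y j = 0 → f y = 0 := by
    intro y j hj hy
    exact Finset.prod_eq_zero (Finset.mem_univ j) (by simp [hj, hy])
  have hfo : ∀ (y : Fin n → ZMod 2), (∀ j : Fin n, t ≤ (j : ℕ) → y j = 1) → f y = 1 := by
    intro y hy
    refine Finset.prod_eq_one ?_
    intro i _
    by_cases h : t ≤ (i : ℕ) <;> simp [h, hy i]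
  constructor
  · intro x
    constructor
    · intro hfix
      have hconst : ∀ j (hj : j < n), x ⟨j, hj⟩ = x ⟨0, hnpos⟩ := by
        intro j
        induction j with
        | zero => intro hj; rfl
        | succ j ih =>
          intro hj
          have hj' : j < n := by omega
          have h1 := congrFun hfix ⟨j, hj'⟩
          simp only [stateMap] at h1
          rw [dif_pos (show j + 1 < n from hj)] at h1
          rw [h1]
          exact ih hj'
      have hx : ∀ i : Fin n, x i = x ⟨0, hnpos⟩ := by
        intro i
        have := hconst i.val i.isLt
        simpa using this
      rcases hcases (x ⟨0, hnpos⟩) with h0 | h1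
      · left; funext i; rw [hx i, h0]
      · right; funext i; rw [hx i, h1]
    · rintro (rfl | rfl)
      · funext i
        simp only [stateMap]
        split
        · rfl
        · exact hfz _ ⟨t, ht⟩ le_rfl rfl
      · funext i
        simp only [stateMap]
        split
        · rfl
        · exact hfo _ (fun _ _ => rfl)
  · intro x
    set F := stateMap n f with hF
    set s : ℕ → Fin n → ZMod 2 := fun k => F^[k] x with hs
    set a : ℕ → ZMod 2 := fun m => s m ⟨0, hnpos⟩ with ha
    have hshift : ∀ k (i : ℕ) (h : i + 1 < n),
        s (k + 1) ⟨i, by omega⟩ = s k ⟨i + 1, h⟩ := by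
      intro k i h
      have : s (k + 1) = F (s k) := Function.iterate_succ_apply' F k x
      rw [this]
      simp only [hF, stateMap]
      rw [dif_pos h]
    have key : ∀ i (hi : i < n) k, s k ⟨i, hi⟩ = a (k + i) := by
      intro i
      induction i with
      | zero => intro hi k; rfl
      | succ i ih =>
        intro hi k
        have hi' : i < n := by omega
        have := hshift k i hi
        rw [← this]
        have := ih hi' (k + 1)
        rw [this]
        congr 1
        omega
    have hrec : ∀ m, a (m + n) = f (s m) := by
      intro m
      have h1 : (n - 1) + 1 < n → False := by omega
      have h2 : n - 1 < n := by omega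
      have h3 : s (m + 1) ⟨n - 1, h2⟩ = f (s m) := by
        have : s (m + 1) = F (s m) := Function.iterate_succ_apply' F m x
        rw [this]
        simp only [hF, stateMap]
        rw [dif_neg (fun h => h1 h)]
      have h4 := key (n - 1) h2 (m + 1)
      rw [h3] at h4
      have : m + 1 + (n - 1) = m + n := by omega
      rw [this] at h4
      exact h4.symm
    -- zero propagation: if a(m+q) = 0 for some q in [t,n), then a(m+n) = 0
    have hzero : ∀ m q (hq1 : t ≤ q) (hq2 : q < n), a (m + q) = 0 → a (m + n) = 0 := by
      intro m q hq1 hq2 haq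
      rw [hrec m]
      refine hfz (s m) ⟨q, hq2⟩ hq1 ?_
      rw [key q hq2 m]
      exact haq
    have hone : ∀ m, (∀ q, t ≤ q → q < n → a (m + q) = 1) → a (m + n) = 1 := by
      intro m hm
      rw [hrec m]
      refine hfo (s m) ?_
      intro j hj
      rw [key j.val j.isLt m]
      exact hm j.val hj j.isLt
    by_cases hcase : ∀ j, t ≤ j → j < n → a j = 1
    · -- everything from index t onward is 1
      have call1 : ∀ m, t ≤ m → a m = 1 := by
        intro m
        induction m using Nat.strong_induction_on with
        | _ m ih =>
          intro hm
          by_cases hmn : m < n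
          · exact hcase m hm hmn
          · have hm' : m - n + n = m := by omega
            rw [← hm']
            refine hone (m - n) ?_
            intro q hq1 hq2
            exact ih (m - n + q) (by omega) (by omega)
      refine ⟨t, Or.inr ?_⟩
      funext i
      have := key i.val i.isLt t
      have h2 : (F^[t] x) i = s t ⟨i.val, i.isLt⟩ := by
        congr 1
      rw [h2, this]
      exact call1 (t + i.val) (by omega)
    · push_neg at hcase
      obtain ⟨j, hj1, hj2, hj3⟩ := hcase
      have hj0 : a j = 0 := by
        rcases hcases (a j) with h | h
        · exact h
        · exact absurd h hj3
      -- everything from index j + (n - t) onward is 0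
      have call0 : ∀ m, j + (n - t) ≤ m → a m = 0 := by
        intro m
        induction m using Nat.strong_induction_on with
        | _ m ih =>
          intro hm
          have hmn : n ≤ m := by omega
          have hm' : m - n + n = m := by omega
          by_cases heq : m = j + (n - t)
          · rw [← hm']
            refine hzero (m - n) t le_rfl ht ?_
            have : m - n + t = j := by omega
            rw [this]; exact hj0
          · rw [← hm']
            refine hzero (m - n) (n - 1) (by omega) (by omega) ?_
            have h5 : m - n + (n - 1) = m - 1 := by omega
            rw [h5]
            exact ih (m - 1) (by omega) (by omega)
      refine ⟨j + (n - t), Or.inl ?_⟩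
      funext i
      have := key i.val i.isLt (j + (n - t))
      have h2 : (F^[j + (n - t)] x) i = s (j + (n - t)) ⟨i.val, i.isLt⟩ := by
        congr 1
      rw [h2, this]
      exact call0 (j + (n - t) + i.val) (by omega)
end
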